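/- For every H ∈ (0,1), ∫_0^∞ ((1+x)^{H−1/2} − x^{H−1/2})² dx = Γ(1−H)·Γ(H+1/2)/(√π · 4^H · H) − 1/(2H). Consequently, with c_H := √(2H)·2^H·B(1−H, H+1/2)^{−1/2}, one has ∫_0^∞ ((1+x)^{H−1/2} − x^{H−1/2})² dx + 1/(2H) = c_H^{−2}. -/

import Mathlib

open MeasureTheory

section FbmAux
open MeasureTheory Set Filter Topology


lemma cfn_eq (a b t : ℝ) (ht : t ∈ Set.Ioo (0:ℝ) 1) :
    (t:ℂ) ^ ((a:ℂ)-1) * (1-(t:ℂ)) ^ ((b:ℂ)-1) = ((t ^ (a-1) * (1-t) ^ (b-1) : ℝ) : ℂ) := by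
  have h1 : ((a:ℂ)-1) = ((a - 1 : ℝ) : ℂ) := by push_cast; ring
  have h2 : ((b:ℂ)-1) = ((b - 1 : ℝ) : ℂ) := by push_cast; ring
  have h3 : (1 - (t:ℂ)) = ((1 - t : ℝ) : ℂ) := by push_cast; ring
  rw [h1, h2, h3, ← Complex.ofReal_cpow ht.1.le, ← Complex.ofReal_cpow (by linarith [ht.2] : (0:ℝ) ≤ 1 - t)]
  push_cast
  ring

lemma betaIntegrableOn {a b : ℝ} (ha : 0 < a) (hb : 0 < b) :
    IntegrableOn (fun t : ℝ => t ^ (a-1) * (1-t) ^ (b-1)) (Set.Ioo 0 1) := by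
  have h := Complex.betaIntegral_convergent (u := (a:ℂ)) (v := (b:ℂ)) (by simpa using ha) (by simpa using hb)
  rw [intervalIntegrable_iff_integrableOn_Ioo_of_le zero_le_one] at h
  have h2 : IntegrableOn (fun x : ℝ => ((x:ℂ) ^ ((a:ℂ)-1) * (1-(x:ℂ)) ^ ((b:ℂ)-1)).re) (Set.Ioo 0 1) := h.re
  refine h2.congr_fun (fun t ht => ?_) measurableSet_Ioo
  simp only [cfn_eq a b t ht, Complex.ofReal_re]

lemma betaValue {a b : ℝ} (ha : 0 < a) (hb : 0 < b) :
    ∫ t in Set.Ioo (0:ℝ) 1, t ^ (a-1) * (1-t) ^ (b-1) =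
      Real.Gamma a * Real.Gamma b / Real.Gamma (a+b) := by
  have h := Complex.Gamma_mul_Gamma_eq_betaIntegral (s := (a:ℂ)) (t := (b:ℂ))
    (by simpa using ha) (by simpa using hb)
  rw [Complex.betaIntegral] at h
  rw [intervalIntegral.integral_of_le zero_le_one, integral_Ioc_eq_integral_Ioo] at h
  rw [setIntegral_congr_fun measurableSet_Ioo (fun t ht => cfn_eq a b t ht)] at h
  have h5 : (∫ x in Set.Ioo (0:ℝ) 1, ((x ^ (a-1) * (1-x) ^ (b-1) : ℝ) : ℂ)) =
      ((∫ x in Set.Ioo (0:ℝ) 1, x ^ (a-1) * (1-x) ^ (b-1) : ℝ) : ℂ) := integral_ofReal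
  rw [h5] at h
  have hab : Real.Gamma (a+b) ≠ 0 := (Real.Gamma_pos_of_pos (by linarith)).ne'
  rw [show ((a:ℂ)+(b:ℂ)) = ((a+b : ℝ) : ℂ) by push_cast; ring] at h
  rw [Complex.Gamma_ofReal, Complex.Gamma_ofReal, Complex.Gamma_ofReal] at h
  rw [← Complex.ofReal_mul, ← Complex.ofReal_mul] at h
  have h4 := Complex.ofReal_inj.mp h
  field_simp
  linarith [h4]



lemma integral_Ioo_of_hasDerivAt_of_tendsto' {F F' : ℝ → ℝ} {a b La Lb : ℝ} (hab : a < b)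
    (hderiv : ∀ x ∈ Set.Ioo a b, HasDerivAt F (F' x) x)
    (hint : IntegrableOn F' (Set.Ioo a b))
    (hA : Tendsto F (𝓝[>] a) (𝓝 La)) (hB : Tendsto F (𝓝[<] b) (𝓝 Lb)) :
    ∫ x in Set.Ioo a b, F' x = Lb - La := by
  set u : ℕ → ℝ := fun n => a + (b-a)/(n+3) with hu_def
  set v : ℕ → ℝ := fun n => b - (b-a)/(n+3) with hv_def
  have hba : 0 < b - a := by linarith
  have ht0 : Tendsto (fun n : ℕ => (b-a)/((n:ℝ)+3)) atTop (𝓝 0) :=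
    Tendsto.div_atTop tendsto_const_nhds
      (tendsto_atTop_add_const_right _ 3 tendsto_natCast_atTop_atTop)
  have hu : Tendsto u atTop (𝓝 a) := by
    simpa using tendsto_const_nhds.add ht0
  have hv : Tendsto v atTop (𝓝 b) := by
    simpa using tendsto_const_nhds.sub ht0
  have hmem : ∀ n : ℕ, a < u n ∧ u n ≤ v n ∧ v n < b := by
    intro n
    have h3 : (0:ℝ) < (n:ℝ) + 3 := by positivity
    have h1 : 0 < (b-a)/((n:ℝ)+3) := by positivity
    have h2 : (b-a)/((n:ℝ)+3) ≤ (b-a)/3 := by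
      apply div_le_div_of_nonneg_left hba.le (by norm_num) (by linarith [Nat.cast_nonneg (α := ℝ) n])
    refine ⟨by simp [hu_def]; linarith, ?_, by simp [hv_def]; linarith⟩
    simp only [hu_def, hv_def]
    linarith
  have cover : AECover (volume.restrict (Set.Ioo a b)) atTop (fun n => Set.Ioc (u n) (v n)) :=
    aecover_Ioo_of_Ioc hu hv
  have key := cover.integral_tendsto_of_countably_generated hint
  have heq : ∀ n : ℕ, ∫ x in Set.Ioc (u n) (v n), F' x = F (v n) - F (u n) := by
    intro n
    obtain ⟨h1, h2, h3⟩ := hmem n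
    rw [← intervalIntegral.integral_of_le h2]
    apply intervalIntegral.integral_eq_sub_of_hasDerivAt
    · intro x hx
      rw [Set.uIcc_of_le h2] at hx
      exact hderiv x ⟨lt_of_lt_of_le h1 hx.1, lt_of_le_of_lt hx.2 h3⟩
    · rw [intervalIntegrable_iff_integrableOn_Ioo_of_le h2]
      exact hint.mono_set (fun x hx => ⟨h1.trans hx.1, hx.2.trans h3⟩)
  have htend : Tendsto (fun n : ℕ => F (v n) - F (u n)) atTop (𝓝 (Lb - La)) := by
    have h1 : Tendsto u atTop (𝓝[>] a) :=
      tendsto_nhdsWithin_of_tendsto_nhds_of_eventually_within _ hu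
        (Eventually.of_forall (fun n => (hmem n).1))
    have h2 : Tendsto v atTop (𝓝[<] b) :=
      tendsto_nhdsWithin_of_tendsto_nhds_of_eventually_within _ hv
        (Eventually.of_forall (fun n => (hmem n).2.2))
    exact (hB.comp h2).sub (hA.comp h1)
  have key' : Tendsto (fun n : ℕ => ∫ x in Set.Ioc (u n) (v n), F' x) atTop
      (𝓝 (∫ x in Set.Ioo a b, F' x)) := by
    refine key.congr (fun n => ?_)
    have hsub : Set.Ioc (u n) (v n) ⊆ Set.Ioo a b := fun x hx =>
      ⟨lt_trans (hmem n).1 hx.1, lt_of_le_of_lt hx.2 (hmem n).2.2⟩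
    rw [Measure.restrict_restrict measurableSet_Ioc, Set.inter_eq_self_of_subset_left hsub]
  exact tendsto_nhds_unique (by simpa only [heq] using key') htend



section
variable {H : ℝ} (hH : H ∈ Set.Ioo (0:ℝ) 1)

/-- decay bound: for `x ≥ 1`, `|(1+x)^κ - x^κ| ≤ |κ| x^(κ-1)` where `κ = H - 1/2`. -/
lemma fbm_f_bound (hH : H ∈ Set.Ioo (0:ℝ) 1) {x : ℝ} (hx : 1 ≤ x) :
    |(1+x) ^ (H-1/2) - x ^ (H-1/2)| ≤ |H-1/2| * x ^ (H-1/2-1) := by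
  set κ := H - 1/2 with hκ
  have hx0 : (0:ℝ) < x := lt_of_lt_of_le one_pos hx
  have hfc : ∀ t ∈ Set.uIcc x (x+1), HasDerivAt (fun s : ℝ => s ^ κ) (κ * t ^ (κ-1)) t := by
    intro t ht
    rw [Set.uIcc_of_le (by linarith)] at ht
    exact Real.hasDerivAt_rpow_const (Or.inl (by linarith [ht.1] : t ≠ 0))
  have hInt : IntervalIntegrable (fun t : ℝ => κ * t ^ (κ-1)) volume x (x+1) := by
    apply ContinuousOn.intervalIntegrable
    apply ContinuousOn.mul continuousOn_const
    intro t ht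
    rw [Set.uIcc_of_le (by linarith)] at ht
    exact (Real.continuousAt_rpow_const t (κ-1) (Or.inl (by linarith [ht.1]))).continuousWithinAt
  have heq : (1+x) ^ κ - x ^ κ = ∫ t in x..(x+1), κ * t ^ (κ-1) := by
    rw [intervalIntegral.integral_eq_sub_of_hasDerivAt hfc hInt]
    ring_nf
  rw [heq]
  have := intervalIntegral.norm_integral_le_of_norm_le_const (C := |κ| * x ^ (κ-1))
    (f := fun t : ℝ => κ * t ^ (κ-1)) (a := x) (b := x+1) ?_
  · rw [Real.norm_eq_abs, show x+1-x = (1:ℝ) by ring, abs_one, mul_one] at this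
    exact this
  · intro t ht
    rw [Set.uIoc_of_le (by linarith)] at ht
    rw [Real.norm_eq_abs, abs_mul]
    apply mul_le_mul_of_nonneg_left _ (abs_nonneg κ)
    rw [abs_of_nonneg (Real.rpow_nonneg (by linarith [ht.1]) _)]
    exact Real.rpow_le_rpow_of_nonpos hx0 ht.1.le (by simp [hκ]; linarith [hH.2])

end

section
variable {H : ℝ}

lemma fbm_meas (κ : ℝ) : Measurable fun x : ℝ => (1+x) ^ κ - x ^ κ := by
  fun_prop

lemma rpow_sq {x : ℝ} (hx : 0 ≤ x) (c : ℝ) : (x ^ c) ^ 2 = x ^ (2*c) := by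
  rw [← Real.rpow_natCast (x ^ c) 2, ← Real.rpow_mul hx]
  norm_num [mul_comm]

lemma one_add_rpow_le {x : ℝ} (hx : 0 ≤ x) (hx1 : x ≤ 1) (κ : ℝ) :
    (1+x) ^ κ ≤ 2 ^ |κ| := by
  rcases le_or_gt 0 κ with h | h
  · calc (1+x) ^ κ ≤ 2 ^ κ := Real.rpow_le_rpow (by linarith) (by linarith) h
      _ ≤ 2 ^ |κ| := Real.rpow_le_rpow_of_exponent_le one_le_two (le_abs_self κ)
  · calc (1+x) ^ κ ≤ 1 ^ κ := Real.rpow_le_rpow_of_nonpos one_pos (by linarith) h.le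
      _ = 1 := Real.one_rpow κ
      _ ≤ 2 ^ |κ| := Real.one_le_rpow one_le_two (abs_nonneg κ)

lemma fbm_int_sq (hH : H ∈ Set.Ioo (0:ℝ) 1) :
    IntegrableOn (fun x : ℝ => ((1+x) ^ (H-1/2) - x ^ (H-1/2)) ^ 2) (Set.Ioi 0) := by
  set κ := H - 1/2 with hκ
  have hmeas : Measurable fun x : ℝ => ((1+x) ^ κ - x ^ κ) ^ 2 := (fbm_meas κ).pow_const 2
  rw [show Set.Ioi (0:ℝ) = Set.Ioc 0 1 ∪ Set.Ioi 1 from (Set.Ioc_union_Ioi_eq_Ioi zero_le_one).symm]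
  apply IntegrableOn.union
  · -- on (0,1]
    have hg : IntegrableOn (fun x : ℝ => 2 * (2 ^ |κ|) ^ 2 + 2 * x ^ (2*κ)) (Set.Ioc 0 1) := by
      apply Integrable.add (integrableOn_const measure_Ioc_lt_top.ne)
      apply Integrable.const_mul
      have : IntegrableOn (fun x : ℝ => x ^ (2*κ)) (Set.Ioc 0 1) := by
        rw [← intervalIntegrable_iff_integrableOn_Ioc_of_le zero_le_one]
        exact intervalIntegral.intervalIntegrable_rpow' (by simp [hκ]; linarith [hH.1])
      exact this
    refine hg.mono' hmeas.aestronglyMeasurable ?_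
    rw [ae_restrict_iff' measurableSet_Ioc]
    refine ae_of_all _ (fun x hx => ?_)
    have hx0 : (0:ℝ) < x := hx.1
    have h1 : (0:ℝ) ≤ (1+x) ^ κ := Real.rpow_nonneg (by linarith) κ
    have h2 : (0:ℝ) ≤ x ^ κ := Real.rpow_nonneg hx0.le κ
    have h3 : (1+x) ^ κ ≤ 2 ^ |κ| := one_add_rpow_le hx0.le hx.2 κ
    have h4 : ((1+x) ^ κ) ^ 2 ≤ (2 ^ |κ|) ^ 2 := by nlinarith
    rw [Real.norm_eq_abs, abs_of_nonneg (sq_nonneg _)]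
    have h5 : (x ^ κ) ^ 2 = x ^ (2*κ) := rpow_sq hx0.le κ
    nlinarith
  · -- on (1,∞)
    have hg : IntegrableOn (fun x : ℝ => κ^2 * x ^ (2*κ-2)) (Set.Ioi 1) :=
      (integrableOn_Ioi_rpow_of_lt (by simp [hκ]; linarith [hH.2]) one_pos).const_mul _
    refine hg.mono' hmeas.aestronglyMeasurable ?_
    rw [ae_restrict_iff' measurableSet_Ioi]
    refine ae_of_all _ (fun x hx => ?_)
    have hx1 : (1:ℝ) ≤ x := le_of_lt hx
    have hx0 : (0:ℝ) < x := lt_of_lt_of_le one_pos hx1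
    have hb := fbm_f_bound hH hx1
    rw [Real.norm_eq_abs, abs_of_nonneg (sq_nonneg _)]
    calc ((1+x) ^ κ - x ^ κ) ^ 2 = |(1+x) ^ κ - x ^ κ| ^ 2 := (sq_abs _).symm
      _ ≤ (|κ| * x ^ (κ-1)) ^ 2 := by
          apply pow_le_pow_left₀ (abs_nonneg _) hb _
      _ = κ^2 * x ^ (2*κ-2) := by
          rw [mul_pow, sq_abs, rpow_sq hx0.le]
          ring_nf

lemma fbm_int_cross (hH : H ∈ Set.Ioo (0:ℝ) 1) :
    IntegrableOn (fun x : ℝ => (1+x) ^ (H-1/2-1) * ((1+x) ^ (H-1/2) - x ^ (H-1/2)))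
      (Set.Ioi 0) := by
  set κ := H - 1/2 with hκ
  have hmeas : Measurable fun x : ℝ => (1+x) ^ (κ-1) * ((1+x) ^ κ - x ^ κ) := by fun_prop
  rw [show Set.Ioi (0:ℝ) = Set.Ioc 0 1 ∪ Set.Ioi 1 from (Set.Ioc_union_Ioi_eq_Ioi zero_le_one).symm]
  apply IntegrableOn.union
  · have hg : IntegrableOn (fun x : ℝ => 2 ^ |κ| + x ^ κ) (Set.Ioc 0 1) := by
      apply Integrable.add (integrableOn_const measure_Ioc_lt_top.ne)
      have : IntegrableOn (fun x : ℝ => x ^ κ) (Set.Ioc 0 1) := by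
        rw [← intervalIntegrable_iff_integrableOn_Ioc_of_le zero_le_one]
        exact intervalIntegral.intervalIntegrable_rpow' (by simp [hκ]; linarith [hH.1])
      exact this
    refine hg.mono' hmeas.aestronglyMeasurable ?_
    rw [ae_restrict_iff' measurableSet_Ioc]
    refine ae_of_all _ (fun x hx => ?_)
    have hx0 : (0:ℝ) < x := hx.1
    have h0 : (0:ℝ) ≤ (1+x) ^ (κ-1) := Real.rpow_nonneg (by linarith) _
    have h1 : (1+x) ^ (κ-1) ≤ 1 :=
      Real.rpow_le_one_of_one_le_of_nonpos (by linarith) (by simp [hκ]; linarith [hH.2])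
    have h2 : (0:ℝ) ≤ x ^ κ := Real.rpow_nonneg hx0.le κ
    have h3 : (1+x) ^ κ ≤ 2 ^ |κ| := one_add_rpow_le hx0.le hx.2 κ
    have h4 : (0:ℝ) ≤ (1+x) ^ κ := Real.rpow_nonneg (by linarith) κ
    rw [Real.norm_eq_abs, abs_mul, abs_of_nonneg h0]
    calc (1+x) ^ (κ-1) * |(1+x) ^ κ - x ^ κ| ≤ 1 * ((1+x) ^ κ + x ^ κ) := by
          apply mul_le_mul h1 (abs_sub _ _ |>.trans ?_) (abs_nonneg _) zero_le_one
          rw [abs_of_nonneg h4, abs_of_nonneg h2]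
      _ ≤ 2 ^ |κ| + x ^ κ := by linarith
  · have hg : IntegrableOn (fun x : ℝ => |κ| * x ^ (2*κ-2)) (Set.Ioi 1) :=
      (integrableOn_Ioi_rpow_of_lt (by simp [hκ]; linarith [hH.2]) one_pos).const_mul _
    refine hg.mono' hmeas.aestronglyMeasurable ?_
    rw [ae_restrict_iff' measurableSet_Ioi]
    refine ae_of_all _ (fun x hx => ?_)
    have hx1 : (1:ℝ) ≤ x := le_of_lt hx
    have hx0 : (0:ℝ) < x := lt_of_lt_of_le one_pos hx1
    have hb := fbm_f_bound hH hx1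
    have h0 : (0:ℝ) ≤ (1+x) ^ (κ-1) := Real.rpow_nonneg (by linarith) _
    have h1 : (1+x) ^ (κ-1) ≤ x ^ (κ-1) :=
      Real.rpow_le_rpow_of_nonpos hx0 (by linarith) (by simp [hκ]; linarith [hH.2])
    rw [Real.norm_eq_abs, abs_mul, abs_of_nonneg h0]
    calc (1+x) ^ (κ-1) * |(1+x) ^ κ - x ^ κ| ≤ x ^ (κ-1) * (|κ| * x ^ (κ-1)) := by
          apply mul_le_mul h1 hb (abs_nonneg _) (Real.rpow_nonneg hx0.le _)
      _ = |κ| * x ^ (2*κ-2) := by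
          rw [show x ^ (2*κ-2) = x ^ (κ-1) * x ^ (κ-1) by
            rw [← Real.rpow_add hx0]; ring_nf]
          ring
end


lemma fbm_half_identity (hH : H ∈ Set.Ioo (0:ℝ) 1) :
    (2*H) * (∫ x in Set.Ioi (0:ℝ), ((1+x) ^ (H-1/2) - x ^ (H-1/2)) ^ 2) =
    (2*(H-1/2)) * ∫ x in Set.Ioi (0:ℝ), (1+x) ^ (H-1/2-1) * ((1+x) ^ (H-1/2) - x ^ (H-1/2)) := by
  set κ := H - 1/2 with hκ
  set f : ℝ → ℝ := fun x => (1+x) ^ κ - x ^ κ with hf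
  set G : ℝ → ℝ := fun x => x * f x ^ 2 with hG
  set G' : ℝ → ℝ := fun x => 2*H * f x ^ 2 - 2*κ * ((1+x) ^ (κ-1) * f x) with hG'
  have hderiv : ∀ x ∈ Set.Ioi (0:ℝ), HasDerivAt G (G' x) x := by
    intro x hx
    have hx0 : (0:ℝ) < x := hx
    have h1 : HasDerivAt (fun y : ℝ => (1+y) ^ κ) (κ * (1+x) ^ (κ-1)) x := by
      have := (HasDerivAt.rpow_const (f := fun y : ℝ => 1 + y) (p := κ)
        ((hasDerivAt_id x).const_add 1) (Or.inl (by positivity)))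
      simpa using this
    have h2 : HasDerivAt (fun y : ℝ => y ^ κ) (κ * x ^ (κ-1)) x :=
      Real.hasDerivAt_rpow_const (Or.inl hx0.ne')
    have hfd : HasDerivAt f (κ * (1+x) ^ (κ-1) - κ * x ^ (κ-1)) x := h1.sub h2
    have hGd := (hasDerivAt_id x).mul (hfd.pow 2)
    convert hGd using 1 <;> try rfl
    have e1 : x ^ (κ-1) * x = x ^ κ := by
      rw [← Real.rpow_add_one hx0.ne']; ring_nf
    have e2 : (1+x) ^ (κ-1) * (1+x) = (1+x) ^ κ := by
      rw [← Real.rpow_add_one (by positivity : (1:ℝ)+x ≠ 0)]; ring_nf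
    have hκ2 : 2*H = 2*κ+1 := by rw [hκ]; ring
    simp only [hG', hf, id_eq, Pi.pow_apply]
    linear_combination (((1+x) ^ κ - x ^ κ)^2)*hκ2 + (2*κ*((1+x) ^ κ - x ^ κ)) * e1
      - (2*κ*((1+x) ^ κ - x ^ κ)) * e2
  have hcont : ContinuousWithinAt G (Set.Ici 0) 0 := by
    rw [← continuousWithinAt_Ioi_iff_Ici]
    have hG00 : G 0 = 0 := by simp [hG]
    unfold ContinuousWithinAt
    rw [hG00]
    apply squeeze_zero' (g := fun x => 2*(2 ^ |κ|)^2 * x + 2 * x ^ (2*κ+1))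
    · filter_upwards [self_mem_nhdsWithin] with x hx
      have : (0:ℝ) < x := hx
      positivity
    · filter_upwards [self_mem_nhdsWithin,
        eventually_nhdsWithin_of_eventually_nhds (eventually_le_nhds (by norm_num : (0:ℝ) < 1))]
        with x hx hx1
      have hx0 : (0:ℝ) < x := hx
      have h1 : (0:ℝ) ≤ (1+x) ^ κ := Real.rpow_nonneg (by linarith) κ
      have h2 : (0:ℝ) ≤ x ^ κ := Real.rpow_nonneg hx0.le κ
      have h3 : (1+x) ^ κ ≤ 2 ^ |κ| := one_add_rpow_le hx0.le hx1 κ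
      have h4 : ((1+x) ^ κ) ^ 2 ≤ (2 ^ |κ|) ^ 2 := by nlinarith
      have h5 : (x ^ κ) ^ 2 = x ^ (2*κ) := rpow_sq hx0.le κ
      have h6 : x ^ (2*κ) * x = x ^ (2*κ+1) := by
        rw [Real.rpow_add_one hx0.ne']
      have hfsq : f x ^ 2 ≤ 2*(2 ^ |κ|)^2 + 2 * x ^ (2*κ) := by
        simp only [hf]; nlinarith
      calc G x = x * f x ^ 2 := rfl
        _ ≤ x * (2*(2 ^ |κ|)^2 + 2 * x ^ (2*κ)) := by
            apply mul_le_mul_of_nonneg_left hfsq hx0.le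
        _ = 2*(2 ^ |κ|)^2 * x + 2 * (x ^ (2*κ) * x) := by ring
        _ = 2*(2 ^ |κ|)^2 * x + 2 * x ^ (2*κ+1) := by rw [h6]
    · have t1 : Tendsto (fun x : ℝ => 2*(2 ^ |κ|)^2 * x) (𝓝[>] 0) (𝓝 0) := by
        have := (continuous_id.tendsto (0:ℝ)).const_mul (2*(2 ^ |κ|)^2)
        simp only [mul_zero, id_eq] at this
        exact this.mono_left nhdsWithin_le_nhds
      have t2 : Tendsto (fun x : ℝ => 2 * x ^ (2*κ+1)) (𝓝[>] 0) (𝓝 0) := by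
        have hc : ContinuousAt (fun x : ℝ => x ^ (2*κ+1)) 0 :=
          Real.continuousAt_rpow_const 0 (2*κ+1) (Or.inr (by simp [hκ]; linarith [hH.1]))
        have h0 : (0:ℝ) ^ (2*κ+1) = 0 :=
          Real.zero_rpow (by simp [hκ]; intro hcon; linarith [hH.1])
        have := (hc.tendsto.const_mul 2).mono_left (nhdsWithin_le_nhds (s := Set.Ioi (0:ℝ)))
        rw [h0, mul_zero] at this
        exact this
      simpa using t1.add t2
  have htop : Tendsto G atTop (𝓝 0) := by
    apply squeeze_zero' (g := fun x => κ^2 * x ^ (-(2-2*κ-1)))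
    · filter_upwards [eventually_ge_atTop (1:ℝ)] with x hx
      have hx0 : (0:ℝ) < x := lt_of_lt_of_le one_pos hx
      have : (0:ℝ) ≤ f x ^ 2 := sq_nonneg _
      positivity
    · filter_upwards [eventually_ge_atTop (1:ℝ)] with x hx
      have hx0 : (0:ℝ) < x := lt_of_lt_of_le one_pos hx
      have hb := fbm_f_bound hH hx
      have h1 : f x ^ 2 ≤ (|κ| * x ^ (κ-1))^2 := by
        rw [← sq_abs (f x)]
        exact pow_le_pow_left₀ (abs_nonneg _) hb 2
      calc G x ≤ x * (|κ| * x ^ (κ-1))^2 := mul_le_mul_of_nonneg_left h1 hx0.le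
        _ = κ^2 * (x ^ (κ-1) * x ^ (κ-1) * x) := by rw [mul_pow, sq_abs]; ring
        _ = κ^2 * x ^ (-(2-2*κ-1)) := by
            rw [← Real.rpow_add hx0, ← Real.rpow_add_one hx0.ne']
            ring_nf
    · have := (tendsto_rpow_neg_atTop (by simp [hκ]; linarith [hH.2] : (0:ℝ) < 2-2*κ-1)).const_mul (κ^2)
      simpa using this
  have hint : IntegrableOn G' (Set.Ioi 0) := by
    apply Integrable.sub
    · exact (fbm_int_sq hH).const_mul _
    · exact (fbm_int_cross hH).const_mul _
  have hftc := integral_Ioi_of_hasDerivAt_of_tendsto hcont hderiv hint htop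
  have hG0 : G 0 = 0 := by simp [hG]
  rw [hG0, sub_zero] at hftc
  have hsplit : ∫ x in Set.Ioi (0:ℝ), G' x =
      2*H * (∫ x in Set.Ioi (0:ℝ), f x ^ 2) -
      2*κ * ∫ x in Set.Ioi (0:ℝ), (1+x) ^ (κ-1) * f x := by
    rw [integral_sub ((fbm_int_sq hH).const_mul _) ((fbm_int_cross hH).const_mul _),
      integral_const_mul, integral_const_mul]
  rw [hsplit] at hftc
  linarith


lemma fbm_subst {H : ℝ} (hH : H ∈ Set.Ioo (0:ℝ) 1) :
    ∫ x in Set.Ioi (0:ℝ), (1+x) ^ (H-1/2-1) * ((1+x) ^ (H-1/2) - x ^ (H-1/2)) =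
    ∫ t in Set.Ioo (0:ℝ) 1, (1-t) ^ (-(2*H)) * (1 - t ^ (H-1/2)) := by
  set κ := H - 1/2 with hκ
  set φ : ℝ → ℝ := fun t => t/(1-t) with hφ
  set φ' : ℝ → ℝ := fun t => 1/(1-t)^2 with hφ'
  have hder : ∀ t ∈ Set.Ioo (0:ℝ) 1, HasDerivWithinAt φ (φ' t) (Set.Ioo 0 1) t := by
    intro t ht
    have h1 : 1 - t ≠ 0 := by have := ht.2; intro h; linarith [ht.2]
    have := (hasDerivAt_id t).div ((hasDerivAt_id t).const_sub 1) h1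
    simp only [id_eq] at this
    have h2 : (1*(1-t) - t*(-1))/(1-t)^2 = φ' t := by
      rw [hφ']; congr 1; ring
    rw [h2] at this
    exact this.hasDerivWithinAt
  have hinj : Set.InjOn φ (Set.Ioo 0 1) := by
    intro t₁ h₁ t₂ h₂ h
    have e₁ : 1 - t₁ ≠ 0 := by intro hc; linarith [h₁.2]
    have e₂ : 1 - t₂ ≠ 0 := by intro hc; linarith [h₂.2]
    simp only [hφ] at h
    field_simp at h
    linarith
  have himg : φ '' Set.Ioo 0 1 = Set.Ioi 0 := by
    ext y
    constructor
    · rintro ⟨t, ht, rfl⟩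
      exact div_pos ht.1 (by linarith [ht.2])
    · intro hy
      have hy0 : (0:ℝ) < y := hy
      refine ⟨y/(1+y), ⟨div_pos hy0 (by linarith), (div_lt_one (by linarith)).mpr (by linarith)⟩, ?_⟩
      simp only [hφ]
      have h1 : (1:ℝ) + y ≠ 0 := by positivity
      field_simp; try ring
  have key := integral_image_eq_integral_abs_deriv_smul measurableSet_Ioo hder hinj
    (fun x : ℝ => (1+x) ^ (κ-1) * ((1+x) ^ κ - x ^ κ))
  rw [himg] at key
  rw [key]
  apply setIntegral_congr_fun measurableSet_Ioo
  intro t ht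
  have ht0 : (0:ℝ) < t := ht.1
  have hs : (0:ℝ) < 1 - t := by linarith [ht.2]
  have h1x : 1 + φ t = (1-t)⁻¹ := by
    simp only [hφ]; field_simp; try ring
  have hxt : φ t = t/(1-t) := rfl
  have e : (1-t) ^ (2*H) = (1-t)^2 * (1-t) ^ (κ-1) * (1-t) ^ κ := by
    rw [← Real.rpow_natCast (1-t) 2, ← Real.rpow_add hs, ← Real.rpow_add hs]
    congr 1
    rw [hκ]; push_cast; ring
  simp only [smul_eq_mul, hφ', h1x]; simp only [hxt]
  rw [Real.inv_rpow hs.le, Real.inv_rpow hs.le, Real.div_rpow ht0.le hs.le,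
    Real.rpow_neg hs.le, e]
  rw [abs_of_pos (by positivity)]
  have hk1 : (1-t) ^ (κ-1) ≠ 0 := by positivity
  have hk2 : (1-t) ^ κ ≠ 0 := by positivity
  field_simp
  try ring
  try tauto


lemma fbm_K_lt {H : ℝ} (hH0 : 0 < H) (hH2 : H < 1/2) :
    ∫ t in Set.Ioo (0:ℝ) 1, (1-t) ^ (-(2*H)) * (1 - t ^ (H-1/2)) =
      1/(1-2*H) - Real.Gamma (H+1/2) * Real.Gamma (1-2*H) / Real.Gamma (3/2-H) := by
  have hb : (0:ℝ) < 1-2*H := by linarith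
  have ha2 : (0:ℝ) < H+1/2 := by linarith
  have h1 := betaIntegrableOn one_pos hb
  have h2 := betaIntegrableOn ha2 hb
  have hsplit : ∫ t in Set.Ioo (0:ℝ) 1, (1-t) ^ (-(2*H)) * (1 - t ^ (H-1/2)) =
      (∫ t in Set.Ioo (0:ℝ) 1, t ^ ((1:ℝ)-1) * (1-t) ^ ((1-2*H)-1)) -
      ∫ t in Set.Ioo (0:ℝ) 1, t ^ ((H+1/2)-1) * (1-t) ^ ((1-2*H)-1) := by
    rw [← integral_sub h1 h2]
    apply setIntegral_congr_fun measurableSet_Ioo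
    intro t ht
    have e0 : ((1:ℝ)-1 : ℝ) = 0 := by norm_num
    have e1 : ((1:ℝ)-2*H)-1 = -(2*H) := by ring
    have e2 : (H+1/2)-1 = H-1/2 := by ring
    simp only [e0, e1, e2, Real.rpow_zero]
    ring
  rw [hsplit, betaValue one_pos hb, betaValue ha2 hb]
  rw [Real.Gamma_one]
  have g1 : Real.Gamma (1 + (1-2*H)) = (1-2*H) * Real.Gamma (1-2*H) := by
    rw [show (1:ℝ) + (1-2*H) = (1-2*H) + 1 by ring, Real.Gamma_add_one hb.ne']
  have g2 : (H+1/2) + (1-2*H) = 3/2 - H := by ring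
  rw [g1, g2]
  have hΓ : Real.Gamma (1-2*H) ≠ 0 := (Real.Gamma_pos_of_pos hb).ne'
  rw [one_mul]
  field_simp
  try ring

lemma fbm_K_gt {H : ℝ} (hH1 : H < 1) (hH2 : 1/2 < H) :
    ∫ t in Set.Ioo (0:ℝ) 1, (1-t) ^ (-(2*H)) * (1 - t ^ (H-1/2)) =
      1/(1-2*H) - Real.Gamma (H+1/2) * Real.Gamma (2-2*H) / ((1-2*H) * Real.Gamma (3/2-H)) := by
  set κ := H - 1/2 with hκ
  have hκ0 : (0:ℝ) < κ := by rw [hκ]; linarith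
  have hκ1 : κ < 1 := by rw [hκ]; linarith
  have hb2 : (0:ℝ) < 2-2*H := by linarith
  have hd : (1:ℝ)-2*H ≠ 0 := by intro h; linarith
  set F : ℝ → ℝ := fun t => (1-t) ^ (1-2*H) * (1 - t ^ κ) / (1-2*H) with hF
  set F' : ℝ → ℝ := fun t => -((1-t) ^ (-(2*H)) * (1 - t ^ κ)) -
      (κ/(1-2*H)) * (t ^ (κ-1) * (1-t) ^ ((2-2*H)-1)) with hF'
  -- target integrand is integrable
  have hTint : IntegrableOn (fun t : ℝ => (1-t) ^ (-(2*H)) * (1 - t ^ κ)) (Set.Ioo 0 1) := by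
    have hbeta := betaIntegrableOn one_pos hb2
    have hmeas : Measurable fun t : ℝ => (1-t) ^ (-(2*H)) * (1 - t ^ κ) := by fun_prop
    refine hbeta.mono' hmeas.aestronglyMeasurable ?_
    rw [ae_restrict_iff' measurableSet_Ioo]
    refine ae_of_all _ (fun t ht => ?_)
    have ht0 : (0:ℝ) < t := ht.1
    have hs : (0:ℝ) < 1 - t := by linarith [ht.2]
    have htk : t ≤ t ^ κ := by
      nth_rewrite 1 [← Real.rpow_one t]
      exact Real.rpow_le_rpow_of_exponent_ge ht0 ht.2.le hκ1.le
    have htk1 : t ^ κ ≤ 1 := Real.rpow_le_one ht0.le ht.2.le hκ0.le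
    have h1 : (0:ℝ) ≤ (1-t) ^ (-(2*H)) := Real.rpow_nonneg hs.le _
    rw [Real.norm_eq_abs, abs_of_nonneg (by nlinarith)]
    calc (1-t) ^ (-(2*H)) * (1 - t ^ κ) ≤ (1-t) ^ (-(2*H)) * (1 - t) := by nlinarith
      _ = t ^ ((1:ℝ)-1) * (1-t) ^ ((2-2*H)-1) := by
          rw [show ((1:ℝ)-1 : ℝ) = 0 by norm_num, Real.rpow_zero, one_mul,
            ← Real.rpow_add_one hs.ne']
          congr 1; ring
  have hbetaint := betaIntegrableOn hκ0 hb2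
  have hFint : IntegrableOn F' (Set.Ioo 0 1) := by
    rw [hF']
    exact (hTint.neg).sub (hbetaint.const_mul _)
  have hderiv : ∀ t ∈ Set.Ioo (0:ℝ) 1, HasDerivAt F (F' t) t := by
    intro t ht
    have ht0 : (0:ℝ) < t := ht.1
    have hs : (0:ℝ) < 1 - t := by linarith [ht.2]
    have hA : HasDerivAt (fun t : ℝ => (1-t) ^ (1-2*H)) ((2*H-1) * (1-t) ^ (-(2*H))) t := by
      have := (HasDerivAt.rpow_const (f := fun t : ℝ => 1 - t) (p := 1-2*H)
        ((hasDerivAt_id t).const_sub 1) (Or.inl hs.ne'))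
      simpa using this
    have hB : HasDerivAt (fun t : ℝ => 1 - t ^ κ) (-(κ * t ^ (κ-1))) t := by
      exact (Real.hasDerivAt_rpow_const (Or.inl ht0.ne')).const_sub 1
    have hFd := (hA.mul hB).div_const (1-2*H)
    have e1 : (1-t) ^ (1-2*H-1) = (1-t) ^ (-(2*H)) := by congr 1; ring
    have e2 : (1-t) ^ (1-2*H) = (1-t) ^ (-(2*H)) * (1-t) := by
      rw [← Real.rpow_add_one hs.ne']; congr 1; ring
    have e3 : (1-t) ^ ((2-2*H)-1) = (1-t) ^ (-(2*H)) * (1-t) := by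
      rw [← Real.rpow_add_one hs.ne']; congr 1; ring
    convert hFd using 1 <;> try rfl
    simp only [hF']
    rw [e2, e3]
    field_simp
    ring
  have hLa : Tendsto F (𝓝[>] 0) (𝓝 (1/(1-2*H))) := by
    have hc1 : ContinuousAt (fun t : ℝ => (1-t) ^ (1-2*H)) 0 := by
      apply ContinuousAt.rpow_const
      · exact (continuous_const.sub continuous_id).continuousAt
      · left; norm_num
    have hc2 : ContinuousAt (fun t : ℝ => t ^ κ) 0 :=
      Real.continuousAt_rpow_const 0 κ (Or.inr hκ0.le)
    have hc : ContinuousAt F 0 := by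
      apply ContinuousAt.div_const
      exact hc1.mul (continuousAt_const.sub hc2)
    have hF0 : F 0 = 1/(1-2*H) := by
      simp [hF, Real.zero_rpow hκ0.ne', Real.one_rpow]
    rw [← hF0]
    exact hc.continuousWithinAt
  have hLb : Tendsto F (𝓝[<] 1) (𝓝 0) := by
    apply squeeze_zero_norm' (a := fun t : ℝ => (1-t) ^ (2-2*H) * |1-2*H|⁻¹)
    · filter_upwards [Ioo_mem_nhdsLT_of_mem (show (1:ℝ) ∈ Set.Ioc (0:ℝ) 1 by constructor <;> norm_num)]
        with t ht
      have ht0 : (0:ℝ) < t := ht.1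
      have hs : (0:ℝ) < 1 - t := by linarith [ht.2]
      have htk : t ≤ t ^ κ := by
        nth_rewrite 1 [← Real.rpow_one t]
        exact Real.rpow_le_rpow_of_exponent_ge ht0 ht.2.le hκ1.le
      have htk1 : t ^ κ ≤ 1 := Real.rpow_le_one ht0.le ht.2.le hκ0.le
      have h1 : (0:ℝ) ≤ (1-t) ^ (1-2*H) := Real.rpow_nonneg hs.le _
      rw [Real.norm_eq_abs, hF, abs_div, abs_of_nonneg (by nlinarith : (0:ℝ) ≤ (1-t) ^ (1-2*H) * (1 - t ^ κ))]
      rw [div_eq_mul_inv]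
      apply mul_le_mul_of_nonneg_right _ (by positivity)
      calc (1-t) ^ (1-2*H) * (1 - t ^ κ) ≤ (1-t) ^ (1-2*H) * (1-t) := by nlinarith
        _ = (1-t) ^ (2-2*H) := by rw [← Real.rpow_add_one hs.ne']; congr 1; ring
    · have hc : ContinuousAt (fun x : ℝ => x ^ (2-2*H)) 0 :=
        Real.continuousAt_rpow_const 0 (2-2*H) (Or.inr hb2.le)
      have h0 : (0:ℝ) ^ (2-2*H) = 0 := Real.zero_rpow hb2.ne'
      have ht1 : Tendsto (fun t : ℝ => 1 - t) (𝓝[<] 1) (𝓝 0) := by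
        have hcont : Continuous (fun t : ℝ => 1 - t) := by fun_prop
        exact (hcont.tendsto' 1 0 (by norm_num)).mono_left nhdsWithin_le_nhds
      have := (hc.tendsto.comp ht1).mul_const |1-2*H|⁻¹
      rw [h0, zero_mul] at this
      exact this
  have hftc := integral_Ioo_of_hasDerivAt_of_tendsto' zero_lt_one hderiv hFint hLa hLb
  -- now express target integral
  have hsplit : ∫ t in Set.Ioo (0:ℝ) 1, F' t =
      -(∫ t in Set.Ioo (0:ℝ) 1, (1-t) ^ (-(2*H)) * (1 - t ^ κ)) -
      (κ/(1-2*H)) * ∫ t in Set.Ioo (0:ℝ) 1, t ^ (κ-1) * (1-t) ^ ((2-2*H)-1) := by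
    have hTneg : IntegrableOn (fun t : ℝ => -((1-t) ^ (-(2*H)) * (1 - t ^ κ))) (Set.Ioo 0 1) :=
      hTint.neg
    simp only [hF']
    rw [integral_sub hTneg (hbetaint.const_mul _), integral_neg, integral_const_mul]
  rw [hftc, betaValue hκ0 hb2] at hsplit
  have gk : Real.Gamma (κ + (2-2*H)) = Real.Gamma (3/2-H) := by
    congr 1; rw [hκ]; ring
  have gk2 : κ * Real.Gamma κ = Real.Gamma (H+1/2) := by
    rw [show H+1/2 = κ+1 by rw [hκ]; ring, Real.Gamma_add_one hκ0.ne']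
  rw [gk] at hsplit
  have hΓ3 : Real.Gamma (3/2-H) ≠ 0 := (Real.Gamma_pos_of_pos (by linarith)).ne'
  have hfin : (κ/(1-2*H)) * (Real.Gamma κ * Real.Gamma (2-2*H) / Real.Gamma (3/2-H)) =
      Real.Gamma (H+1/2) * Real.Gamma (2-2*H) / ((1-2*H) * Real.Gamma (3/2-H)) := by
    rw [← gk2]
    field_simp
    try ring
  linarith [hsplit, hfin]


lemma four_rpow (H : ℝ) : (4:ℝ) ^ H = 2 ^ (2*H) := by
  rw [show (4:ℝ) = 2 ^ (2:ℕ) by norm_num, ← Real.rpow_natCast 2 2, ← Real.rpow_mul (by norm_num)]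
  norm_num


lemma alg_lt {H A B D E P Q : ℝ} (h0 : 0 < H) (h2 : H < 1/2)
    (hD : D ≠ 0) (hP : P ≠ 0) (hQ : Q ≠ 0) (dup : D*E = B*Q*P) :
    (2*H) * (E*A/(P*Q*H) - 1/(2*H)) = (2*(H-1/2)) * (1/(1-2*H) - A*B/((1/2-H)*D)) := by
  have h12 : (1:ℝ)/2 - H ≠ 0 := by intro h; linarith
  have hd : (1:ℝ)-2*H ≠ 0 := by intro h; linarith
  have hH : H ≠ 0 := h0.ne'
  field_simp
  linear_combination (A*(2-4*H)) * dup

lemma alg_gt {H A C E G P Q : ℝ} (h0 : 0 < H) (h2 : 1/2 < H) (h1 : H < 1)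
    (hC : C ≠ 0) (hP : P ≠ 0) (hQ : Q ≠ 0) (dup : E*C = G*Q*P) :
    (2*H) * (E*A/(P*(2*Q)*H) - 1/(2*H)) = (2*(H-1/2)) * (1/(1-2*H) - A*G/((1-2*H)*C)) := by
  have hd : (1:ℝ)-2*H ≠ 0 := by intro h; linarith
  have hH : H ≠ 0 := h0.ne'
  field_simp
  linear_combination (A*(1-2*H)) * dup

lemma gamma_alg_lt {H : ℝ} (h0 : 0 < H) (h2 : H < 1/2) :
    (2*H) * (Real.Gamma (1-H) * Real.Gamma (H+1/2) / (Real.sqrt Real.pi * 4 ^ H * H) - 1/(2*H)) =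
    (2*(H-1/2)) * (1/(1-2*H) - Real.Gamma (H+1/2) * Real.Gamma (1-2*H) / Real.Gamma (3/2-H)) := by
  have dup := Real.Gamma_mul_Gamma_add_half (1/2-H)
  rw [show (1/2-H)+1/2 = 1-H by ring, show 2*(1/2-H) = 1-2*H by ring,
    show (1:ℝ)-(1-2*H) = 2*H by ring] at dup
  have g32 : Real.Gamma (3/2-H) = (1/2-H) * Real.Gamma (1/2-H) := by
    rw [show (3:ℝ)/2-H = (1/2-H)+1 by ring, Real.Gamma_add_one (by intro h; linarith : (1:ℝ)/2-H ≠ 0)]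
  rw [four_rpow, g32]
  have hD : (0:ℝ) < Real.Gamma (1/2-H) := Real.Gamma_pos_of_pos (by linarith)
  have hP : (0:ℝ) < Real.sqrt Real.pi := Real.sqrt_pos.mpr Real.pi_pos
  have hQ : (0:ℝ) < (2:ℝ) ^ (2*H) := Real.rpow_pos_of_pos (by norm_num) _
  exact alg_lt h0 h2 hD.ne' hP.ne' hQ.ne' dup

lemma gamma_alg_gt {H : ℝ} (h1 : H < 1) (h2 : 1/2 < H) (h0 : 0 < H) :
    (2*H) * (Real.Gamma (1-H) * Real.Gamma (H+1/2) / (Real.sqrt Real.pi * 4 ^ H * H) - 1/(2*H)) =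
    (2*(H-1/2)) * (1/(1-2*H) - Real.Gamma (H+1/2) * Real.Gamma (2-2*H) / ((1-2*H) * Real.Gamma (3/2-H))) := by
  have dup := Real.Gamma_mul_Gamma_add_half (1-H)
  rw [show (1-H)+1/2 = 3/2-H by ring, show 2*(1-H) = 2-2*H by ring,
    show (1:ℝ)-(2-2*H) = 2*H-1 by ring] at dup
  have h4 : (4:ℝ) ^ H = 2 * 2 ^ (2*H-1) := by
    rw [four_rpow, show 2*H = (2*H-1)+1 by ring, Real.rpow_add_one (by norm_num : (2:ℝ) ≠ 0)]
    ring
  rw [h4]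
  have hC : (0:ℝ) < Real.Gamma (3/2-H) := Real.Gamma_pos_of_pos (by linarith)
  have hP : (0:ℝ) < Real.sqrt Real.pi := Real.sqrt_pos.mpr Real.pi_pos
  have hQ : (0:ℝ) < (2:ℝ) ^ (2*H-1) := Real.rpow_pos_of_pos (by norm_num) _
  exact alg_gt h0 h2 h1 hC.ne' hP.ne' hQ.ne' dup

end FbmAux

noncomputable section

/-- The Beta function `B(a,b) = Γ(a)Γ(b)/Γ(a+b)`. -/
def betaF (a b : ℝ) : ℝ := Real.Gamma a * Real.Gamma b / Real.Gamma (a + b)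

/-- The normalizing constant `c_H = √(2H)·2^H·B(1-H, H+1/2)^{-1/2}`. -/
def cH (H : ℝ) : ℝ := Real.sqrt (2 * H) * (2 : ℝ) ^ H * (betaF (1 - H) (H + 1 / 2)) ^ (-(1 / 2) : ℝ)

lemma conj2 {H : ℝ} (hH : H ∈ Set.Ioo (0:ℝ) 1) :
    Real.Gamma (1-H) * Real.Gamma (H+1/2) / (Real.sqrt Real.pi * 4 ^ H * H) = ((cH H) ^ 2)⁻¹ := by
  obtain ⟨h0, h1⟩ := hH
  have hB : (0:ℝ) < betaF (1-H) (H+1/2) := by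
    unfold betaF
    have g1 : (0:ℝ) < Real.Gamma (1-H) := Real.Gamma_pos_of_pos (by linarith)
    have g2 : (0:ℝ) < Real.Gamma (H+1/2) := Real.Gamma_pos_of_pos (by linarith)
    have g3 : (0:ℝ) < Real.Gamma ((1-H)+(H+1/2)) := Real.Gamma_pos_of_pos (by linarith)
    positivity
  have e1 : (cH H) ^ 2 = (2*H) * 4 ^ H * (betaF (1-H) (H+1/2))⁻¹ := by
    unfold cH
    rw [mul_pow, mul_pow]
    rw [Real.sq_sqrt (by linarith : (0:ℝ) ≤ 2*H)]
    rw [show ((2:ℝ) ^ H) ^ 2 = 2 ^ (2*H) by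
      rw [← Real.rpow_natCast ((2:ℝ) ^ H) 2, ← Real.rpow_mul (by norm_num)]; congr 1; ring]
    rw [show ((betaF (1-H) (H+1/2)) ^ (-(1/2):ℝ)) ^ 2 = (betaF (1-H) (H+1/2))⁻¹ by
      rw [← Real.rpow_natCast ((betaF (1-H) (H+1/2)) ^ (-(1/2):ℝ)) 2, ← Real.rpow_mul hB.le]
      norm_num [Real.rpow_neg_one]]
    rw [four_rpow]
  rw [e1]
  have e2 : Real.Gamma ((1-H)+(H+1/2)) = Real.sqrt Real.pi / 2 := by
    rw [show (1-H)+(H+1/2) = (1/2:ℝ)+1 by ring, Real.Gamma_add_one (by norm_num : (1/2:ℝ) ≠ 0),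
      Real.Gamma_one_half_eq]
    ring
  have hP : (0:ℝ) < Real.sqrt Real.pi := Real.sqrt_pos.mpr Real.pi_pos
  have h4 : (0:ℝ) < (4:ℝ) ^ H := Real.rpow_pos_of_pos (by norm_num) _
  rw [mul_inv, mul_inv, inv_inv]
  unfold betaF
  rw [e2]
  field_simp
  try ring

/-- Evaluation of the integral `∫_0^∞ ((1+x)^{H-1/2} - x^{H-1/2})² dx`, used to identify the
normalizing constant `c_H` of fractional Brownian motion: the integral equals
`Γ(1-H)Γ(H+1/2)/(√π·4^H·H) - 1/(2H)`, and consequently the integral plus `1/(2H)`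
equals `c_H^{-2}`. -/
theorem fbm_constant_integral (H : ℝ) (hH : H ∈ Set.Ioo (0 : ℝ) 1) :
    (∫ x in Set.Ioi (0 : ℝ), ((1 + x) ^ (H - 1 / 2) - x ^ (H - 1 / 2)) ^ 2) =
      Real.Gamma (1 - H) * Real.Gamma (H + 1 / 2) / (Real.sqrt Real.pi * 4 ^ H * H) -
        1 / (2 * H) ∧
    (∫ x in Set.Ioi (0 : ℝ), ((1 + x) ^ (H - 1 / 2) - x ^ (H - 1 / 2)) ^ 2) + 1 / (2 * H) =
      ((cH H) ^ 2)⁻¹ := by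
  have h0 := hH.1
  have h1 := hH.2
  have hconj1 : (∫ x in Set.Ioi (0 : ℝ), ((1 + x) ^ (H - 1 / 2) - x ^ (H - 1 / 2)) ^ 2) =
      Real.Gamma (1 - H) * Real.Gamma (H + 1 / 2) / (Real.sqrt Real.pi * 4 ^ H * H) -
        1 / (2 * H) := by
    rcases lt_trichotomy H (1/2) with hlt | heq | hgt
    · have hkey := fbm_half_identity hH
      rw [fbm_subst hH, fbm_K_lt h0 hlt] at hkey
      have halg := gamma_alg_lt h0 hlt
      have h2H : (2*H) ≠ 0 := by positivity
      apply mul_left_cancel₀ h2H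
      rw [hkey, halg]
    · subst heq
      norm_num
      rw [Real.Gamma_one_half_eq]
      have hP : (0:ℝ) < Real.sqrt Real.pi := Real.sqrt_pos.mpr Real.pi_pos
      field_simp
      ring
    · have hkey := fbm_half_identity hH
      rw [fbm_subst hH, fbm_K_gt h1 hgt] at hkey
      have halg := gamma_alg_gt h1 hgt h0
      have h2H : (2*H) ≠ 0 := by positivity
      apply mul_left_cancel₀ h2H
      rw [hkey, halg]
  refine ⟨hconj1, ?_⟩
  rw [hconj1, ← conj2 hH]
  ring

end
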